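/- For every instance I, there exists a subset S* ⊆ S with |S*| ≤ q satisfying non-wastefulness, maximal diversity, balanced representation, and justified envy-freeness. -/

import Mathlib

open Classical

/-- An instance `I = (S, q, ≻, T, τ, η)`: a finite set of students with a strict
total order (priority, modeled by a linear order where `s' < s` means `s ≻ s'`),
a positive capacity `q`, a finite set of types `T`, a type assignment `τ`, and
ranked quotas `η t j` for ranks `j ∈ {1,…,r}`. -/
structure Inst where
  S : Type
  T : Type
  [fS : Fintype S]
  [dS : DecidableEq S]
  [lS : LinearOrder S]
  [fT : Fintype T]
  [dT : DecidableEq T]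
  q : ℕ
  qpos : 0 < q
  r : ℕ
  τ : S → Finset T
  η : T → ℕ → ℕ

attribute [instance] Inst.fS Inst.dS Inst.lS Inst.fT Inst.dT

/-- `s ≻ s'` : student `s` has strictly higher priority than `s'`. -/
def Inst.prio (I : Inst) (s s' : I.S) : Prop := s' < s

/-- A (potential) reserved seat: a type (`none` = the general type `t₀`),
a rank, and an index. -/
abbrev SeatT (I : Inst) := Option I.T × ℕ × ℕ

/-- The rank of a seat. -/
def seatRank (I : Inst) (v : SeatT I) : ℕ := v.2.1

/-- The type of a seat (`none` = general type `t₀`). -/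
def seatType (I : Inst) (v : SeatT I) : Option I.T := v.1

/-- Seats actually present in the ranked reservation graph: for each type `t`, rank
`1 ≤ j ≤ r` and index `i < η t j` a seat, and `q` general seats of rank `r`. -/
def SeatValid (I : Inst) (v : SeatT I) : Prop :=
  match v.1 with
  | some t => 1 ≤ v.2.1 ∧ v.2.1 ≤ I.r ∧ v.2.2 < I.η t v.2.1
  | none => v.2.1 = I.r ∧ v.2.2 < I.q

/-- There is an edge between student `s` and a seat of type `t` iff `t ∈ τ s` or
`t` is the general type `t₀`. -/
def EdgeOK (I : Inst) (s : I.S) (v : SeatT I) : Prop :=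
  match v.1 with
  | some t => t ∈ I.τ s
  | none => True

/-- A matching in the ranked reservation graph: a set of edges of `G` in which
every student and every seat appears at most once. -/
def IsMatching (I : Inst) (M : Finset (I.S × SeatT I)) : Prop :=
  (∀ e ∈ M, SeatValid I e.2 ∧ EdgeOK I e.1 e.2) ∧
  (∀ e ∈ M, ∀ e' ∈ M, e.1 = e'.1 → e = e') ∧
  (∀ e ∈ M, ∀ e' ∈ M, e.2 = e'.2 → e = e')

/-- `S_M`: the set of students covered by the matching `M`. -/
def covered (I : Inst) (M : Finset (I.S × SeatT I)) : Finset I.S := M.image Prod.fst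

/-- `x_i`: the number of edges of rank `i` in `M` (the `i`-th entry of the
signature `ρ(M)`). -/
def sig (I : Inst) (M : Finset (I.S × SeatT I)) (i : ℕ) : ℕ :=
  (M.filter (fun e => seatRank I e.2 = i)).card

/-- `ρ(M) <lex ρ(M')` : the signature of `M'` is lexicographically strictly
better than that of `M`. -/
def SigLT (I : Inst) (M M' : Finset (I.S × SeatT I)) : Prop :=
  ∃ k, 1 ≤ k ∧ k ≤ I.r ∧ (∀ i, 1 ≤ i → i < k → sig I M i = sig I M' i) ∧
    sig I M k < sig I M' k

/-- A matching of size at most `q` is rank-maximal if its signature is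
lexicographically ≥ that of every matching of size at most `q`. -/
def RankMaximal (I : Inst) (M : Finset (I.S × SeatT I)) : Prop :=
  IsMatching I M ∧ M.card ≤ I.q ∧
    ∀ M', IsMatching I M' → M'.card ≤ I.q → ¬ SigLT I M M'

/-- `U`: the set of groups (type combinations actually occurring among students). -/
def groups (I : Inst) : Finset (Finset I.T) := Finset.univ.image I.τ

/-- `S_u`: the set of students of group `u`. -/
def Su (I : Inst) (u : Finset I.T) : Finset I.S :=
  Finset.univ.filter (fun s => I.τ s = u)

/-- `|M_u|`: the number of students of group `u` covered by `M`. -/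
def Mu (I : Inst) (M : Finset (I.S × SeatT I)) (u : Finset I.T) : ℕ :=
  ((covered I M).filter (fun s => I.τ s = u)).card

/-- `min_{u ∈ U} |M_u| / |S_u|` (as `WithTop ℚ`; it is `⊤` iff `U = ∅`). -/
noncomputable def minRatio (I : Inst) (M : Finset (I.S × SeatT I)) : WithTop ℚ :=
  ((groups I).image (fun u => ((Mu I M u : ℚ) / ((Su I u).card : ℚ)))).min

/-- `M` attains balanced representation: `M` is rank-maximal of size at most `q`
and maximizes `min_{u∈U} |M_u|/|S_u|` over all such matchings. -/
def BalancedRep (I : Inst) (M : Finset (I.S × SeatT I)) : Prop :=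
  RankMaximal I M ∧ ∀ M', RankMaximal I M' → minRatio I M' ≤ minRatio I M

/-- The greedy choice function `Ch*`: process the students in decreasing order of
priority, adding the current student `s` whenever some matching of size at most `q`
that is rank-maximal and attains balanced representation covers `S* ∪ {s}`. -/
noncomputable def ChStar (I : Inst) : Finset I.S :=
  ((Finset.sort (Finset.univ : Finset I.S) (· ≤ ·)).reverse).foldl
    (fun A s =>
      if ∃ M, BalancedRep I M ∧ insert s A ⊆ covered I M then insert s A else A) ∅

/-- Non-wastefulness of a chosen set: `|S*| = min (|S|, q)`. -/
def NonWasteful (I : Inst) (A : Finset I.S) : Prop :=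
  A.card = min (Fintype.card I.S) I.q

/-- Maximal diversity of a chosen set: some rank-maximal matching of size at most
`q` covers only students of `S*`. -/
def MaxDiversity (I : Inst) (A : Finset I.S) : Prop :=
  ∃ M, RankMaximal I M ∧ covered I M ⊆ A

/-- Balanced representation of a chosen set: some matching in `𝕄` attaining
balanced representation covers all of `S*`. -/
def BalancedRepSet (I : Inst) (A : Finset I.S) : Prop :=
  ∃ M, BalancedRep I M ∧ A ⊆ covered I M

/-- Justified envy-freeness: no `s ∉ S*`, `s' ∈ S*` with `s ≻ s'` such that
`(S* ∪ {s}) \ {s'}` satisfies both maximal diversity and balanced representation. -/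
def JEF (I : Inst) (A : Finset I.S) : Prop :=
  ¬ ∃ s s', s ∉ A ∧ s' ∈ A ∧ I.prio s s' ∧
    MaxDiversity I (insert s A \ {s'}) ∧ BalancedRepSet I (insert s A \ {s'})

/-- `I` is valid w.r.t. a target vector `δ`: some rank-maximal matching of size at
most `q` has `|M_u| ≥ δ_u` for every group `u ∈ U`. -/
def ValidWrt (I : Inst) (δ : Finset I.T → ℕ) : Prop :=
  ∃ M, RankMaximal I M ∧ ∀ u ∈ groups I, δ u ≤ Mu I M u

/-- The max-min ratio `α(I)`: the maximum over rank-maximal matchings `M` of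
size at most `q` of `min_{u∈U} |M_u|/|S_u|`. -/
noncomputable def alphaQ (I : Inst) : ℚ :=
  let cands : Finset ℚ :=
    ((Finset.Icc 0 (Fintype.card I.S)) ×ˢ groups I).image
      (fun p => (p.1 : ℚ) / ((Su I p.2).card : ℚ))
  WithBot.unbotD 0 ((cands.filter
      (fun x : ℚ => ∃ M, RankMaximal I M ∧ minRatio I M = (x : WithTop ℚ))).max)

/-- The crucial vector `δ*` : `δ*_u = ⌊α(I)·|S_u|⌋`. -/
noncomputable def deltaStar (I : Inst) (u : Finset I.T) : ℕ :=
  ⌊alphaQ I * ((Su I u).card : ℚ)⌋₊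

/-- The `k` highest-priority students of `A`. -/
def topK (I : Inst) (A : Finset I.S) (k : ℕ) : Finset I.S :=
  A.filter (fun s => (A.filter (fun s' => s ≤ s')).card ≤ k)

/-! ### The flow network -/

/-- Nodes of the flow network: `Sum.inl 0` = source `a`, `Sum.inl 1` = sink `b`,
`Sum.inl 2` = the capacity node `Q`; group nodes, type nodes (`none` = `t₀`),
and rank nodes `t^i` (rank value `i+1` for `i : Fin r`). -/
abbrev Node (I : Inst) := Fin 3 ⊕ Finset I.T ⊕ Option I.T ⊕ (Option I.T × Fin I.r)

def nSrc (I : Inst) : Node I := Sum.inl 0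
def nSink (I : Inst) : Node I := Sum.inl 1
def nQ (I : Inst) : Node I := Sum.inl 2
def nGrp (I : Inst) (u : Finset I.T) : Node I := Sum.inr (Sum.inl u)
def nTyp (I : Inst) (t : Option I.T) : Node I := Sum.inr (Sum.inr (Sum.inl t))
def nRnk (I : Inst) (t : Option I.T) (i : Fin I.r) : Node I :=
  Sum.inr (Sum.inr (Sum.inr (t, i)))

/-- Quotas including the general type: `η_{t₀}^r = q` and `η_{t₀}^j = 0` for `j < r`. -/
def ηgen (I : Inst) (t : Option I.T) (j : ℕ) : ℕ :=
  match t with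
  | some t => I.η t j
  | none => if j = I.r then I.q else 0

/-- Capacities of the flow network (capacity `0` = no edge). -/
def cap (I : Inst) : Node I → Node I → ℕ := fun x y =>
  match x, y with
  | Sum.inl a, Sum.inl b => if a = 2 ∧ b = 1 then I.q else 0
  | Sum.inl a, Sum.inr (Sum.inl u) => if a = 0 then (Su I u).card else 0
  | Sum.inr (Sum.inl u), Sum.inr (Sum.inr (Sum.inl (some t))) =>
      ((Su I u).filter (fun s => t ∈ I.τ s)).card
  | Sum.inr (Sum.inl u), Sum.inr (Sum.inr (Sum.inl none)) => (Su I u).card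
  | Sum.inr (Sum.inr (Sum.inl t)), Sum.inr (Sum.inr (Sum.inr (t', i))) =>
      if t = t' then ηgen I t' ((i : ℕ) + 1) else 0
  | Sum.inr (Sum.inr (Sum.inr (t, i))), Sum.inl a =>
      if a = 2 then ηgen I t ((i : ℕ) + 1) else 0
  | _, _ => 0

/-- Costs of the flow network: the edge `t → t^i` has cost equal to the rank
`i+1`; all other edges have cost `0`. -/
def cost (I : Inst) : Node I → Node I → ℕ := fun x y =>
  match x, y with
  | Sum.inr (Sum.inr (Sum.inl t)), Sum.inr (Sum.inr (Sum.inr (t', i))) =>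
      if t = t' then (i : ℕ) + 1 else 0
  | _, _ => 0

/-- A flow: nonnegative, within capacities, and conserved at every node other
than the source and the sink. -/
def IsFlow (I : Inst) (f : Node I → Node I → ℝ) : Prop :=
  (∀ x y, 0 ≤ f x y) ∧ (∀ x y, f x y ≤ (cap I x y : ℝ)) ∧
  (∀ x : Node I, x ≠ nSrc I → x ≠ nSink I → (∑ y, f y x) = ∑ y, f x y)

/-- The value of a flow: `Σ_u f(a, u)`. -/
noncomputable def flowVal (I : Inst) (f : Node I → Node I → ℝ) : ℝ :=
  ∑ u : Finset I.T, f (nSrc I) (nGrp I u)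

/-- The cost of a flow: `Σ_e cost(e) · f(e)`. -/
noncomputable def flowCost (I : Inst) (f : Node I → Node I → ℝ) : ℝ :=
  ∑ x : Node I, ∑ y : Node I, (cost I x y : ℝ) * f x y

/-- A maximum flow. -/
def IsMaxFlow (I : Inst) (f : Node I → Node I → ℝ) : Prop :=
  IsFlow I f ∧ ∀ g, IsFlow I g → flowVal I g ≤ flowVal I f

/-- A minimum-cost maximum flow. -/
def IsMinCostMaxFlow (I : Inst) (f : Node I → Node I → ℝ) : Prop :=
  IsMaxFlow I f ∧ ∀ g, IsMaxFlow I g → flowCost I f ≤ flowCost I g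

/-- The flow `f_M` induced by a matching `M`. -/
noncomputable def inducedFlow (I : Inst) (M : Finset (I.S × SeatT I)) :
    Node I → Node I → ℝ := fun x y =>
  match x, y with
  | Sum.inl a, Sum.inl b => if a = 2 ∧ b = 1 then (M.card : ℝ) else 0
  | Sum.inl a, Sum.inr (Sum.inl u) => if a = 0 then (Mu I M u : ℝ) else 0
  | Sum.inr (Sum.inl u), Sum.inr (Sum.inr (Sum.inl t)) =>
      ((M.filter (fun e => I.τ e.1 = u ∧ seatType I e.2 = t)).card : ℝ)
  | Sum.inr (Sum.inr (Sum.inl t)), Sum.inr (Sum.inr (Sum.inr (t', i))) =>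
      if t = t' then
        ((M.filter (fun e => seatType I e.2 = t ∧ seatRank I e.2 = (i : ℕ) + 1)).card : ℝ)
      else 0
  | Sum.inr (Sum.inr (Sum.inr (t, i))), Sum.inl a =>
      if a = 2 then
        ((M.filter (fun e => seatType I e.2 = t ∧ seatRank I e.2 = (i : ℕ) + 1)).card : ℝ)
      else 0
  | _, _ => 0

/-! ### Alternating and augmenting paths -/

/-- The edge set of a path encoded by its list of students `a₀,…` and list of
seats `v₀,…` (edges `(aₖ, vₖ)` and `(aₖ₊₁, vₖ)`). -/
def edgesOf (I : Inst) (students : List I.S) (seats : List (SeatT I)) :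
    Finset (I.S × SeatT I) :=
  (students.zip seats).toFinset ∪ (students.tail.zip seats).toFinset

/-- Symmetric difference `M ⊕ P = (M \ P) ∪ (P \ M)`. -/
def symmDiffM (I : Inst) (M P : Finset (I.S × SeatT I)) : Finset (I.S × SeatT I) :=
  (M \ P) ∪ (P \ M)

/-- An alternating path w.r.t. `M` from an uncovered student to a covered student:
students `a₀, …, aₙ` and seats `v₀, …, vₙ₋₁`, with `(aₖ, vₖ) ∉ M` edges of `G`
and `(aₖ₊₁, vₖ) ∈ M`. -/
structure AltPath (I : Inst) (M : Finset (I.S × SeatT I)) where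
  students : List I.S
  seats : List (SeatT I)
  len : students.length = seats.length + 1
  nodupS : students.Nodup
  nodupV : seats.Nodup
  notM : ∀ e ∈ students.zip seats, e ∉ M ∧ SeatValid I e.2 ∧ EdgeOK I e.1 e.2
  inM : ∀ e ∈ students.tail.zip seats, e ∈ M

/-- The edge set of an alternating path. -/
def AltPath.edges {I : Inst} {M : Finset (I.S × SeatT I)} (P : AltPath I M) :
    Finset (I.S × SeatT I) :=
  edgesOf I P.students P.seats

/-- An augmenting path w.r.t. `M` from an uncovered student to an uncovered seat:
students `a₀, …, aₙ` and seats `v₀, …, vₙ`, with `(aₖ, vₖ) ∉ M` edges of `G`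
and `(aₖ₊₁, vₖ) ∈ M`. -/
structure AugPath (I : Inst) (M : Finset (I.S × SeatT I)) where
  students : List I.S
  seats : List (SeatT I)
  len : students.length = seats.length
  nodupS : students.Nodup
  nodupV : seats.Nodup
  notM : ∀ e ∈ students.zip seats, e ∉ M ∧ SeatValid I e.2 ∧ EdgeOK I e.1 e.2
  inM : ∀ e ∈ students.tail.zip seats, e ∈ M

/-- The edge set of an augmenting path. -/
def AugPath.edges {I : Inst} {M : Finset (I.S × SeatT I)} (P : AugPath I M) :
    Finset (I.S × SeatT I) :=
  edgesOf I P.students P.seats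

/-- The instance obtained from `I` by restricting the student set to `X`. -/
@[reducible] def restrict (I : Inst) (X : Finset I.S) : Inst :=
  { S := {s : I.S // s ∈ X}
    T := I.T
    fS := inferInstance
    dS := inferInstance
    lS := inferInstance
    fT := I.fT
    dT := I.dT
    q := I.q
    qpos := I.qpos
    r := I.r
    τ := fun s => I.τ s.1
    η := I.η }


/-! ### Auxiliary material for the proof -/

section AuxProof

open Finset

variable (I : Inst)

/-- Bound for seat indices. -/
noncomputable def idxBound : ℕ :=
  I.q + (Finset.univ : Finset I.T).sup (fun t => (Finset.range (I.r + 1)).sup (I.η t))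

/-- A finite superset of all valid seats. -/
noncomputable def validSeats : Finset (SeatT I) :=
  (Finset.univ : Finset (Option I.T)) ×ˢ (Finset.range (I.r + 1) ×ˢ Finset.range (idxBound I))

lemma mem_validSeats {v : SeatT I} (hv : SeatValid I v) : v ∈ validSeats I := by
  obtain ⟨t, j, i⟩ := v
  simp only [validSeats, Finset.mem_product, Finset.mem_univ, Finset.mem_range, true_and]
  cases t with
  | none =>
      obtain ⟨h1, h2⟩ := hv
      dsimp only at h1 h2
      refine ⟨by omega, ?_⟩
      unfold idxBound; omega
  | some t =>
      obtain ⟨h1, h2, h3⟩ := hv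
      dsimp only at h1 h2 h3
      refine ⟨by omega, ?_⟩
      have hb1 : I.η t j ≤ (Finset.range (I.r + 1)).sup (I.η t) :=
        Finset.le_sup (by simp only [Finset.mem_range]; omega)
      have hb2 : (Finset.range (I.r + 1)).sup (I.η t) ≤
          (Finset.univ : Finset I.T).sup (fun t => (Finset.range (I.r + 1)).sup (I.η t)) :=
        Finset.le_sup (f := fun t => (Finset.range (I.r + 1)).sup (I.η t)) (Finset.mem_univ t)
      unfold idxBound; omega

/-- All potential edges. -/
noncomputable def bigE : Finset (I.S × SeatT I) := Finset.univ ×ˢ validSeats I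

lemma matching_subset {M : Finset (I.S × SeatT I)} (hM : IsMatching I M) : M ⊆ bigE I := by
  intro e he
  simp only [bigE, Finset.mem_product, Finset.mem_univ, true_and]
  exact mem_validSeats I (hM.1 e he).1

lemma covered_card {M : Finset (I.S × SeatT I)} (hM : IsMatching I M) :
    (covered I M).card = M.card :=
  Finset.card_image_of_injOn (fun e he e' he' h => hM.2.1 e he e' he' h)

lemma exists_max_rel {α : Type*} (r : α → α → Prop)
    (htr : ∀ a b c, r a b → r b c → r a c) (hirr : ∀ a, ¬ r a a) :
    ∀ s : Finset α, s.Nonempty → ∃ a ∈ s, ∀ b ∈ s, ¬ r a b := by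
  intro s
  induction s using Finset.induction with
  | empty => intro h; simp at h
  | @insert x t hx ih =>
      intro _
      rcases t.eq_empty_or_nonempty with h | h
      · subst h
        refine ⟨x, Finset.mem_insert_self _ _, ?_⟩
        intro b hb
        rcases Finset.mem_insert.1 hb with rfl | hb
        · exact hirr b
        · simp at hb
      · obtain ⟨a, ha, hmax⟩ := ih h
        by_cases hax : r a x
        · refine ⟨x, Finset.mem_insert_self _ _, ?_⟩
          intro b hb hrb
          rcases Finset.mem_insert.1 hb with rfl | hb
          · exact hirr b hrb
          · exact hmax b hb (htr _ _ _ hax hrb)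
        · refine ⟨a, Finset.mem_insert_of_mem ha, ?_⟩
          intro b hb hrb
          rcases Finset.mem_insert.1 hb with rfl | hb
          · exact hax hrb
          · exact hmax b hb hrb

lemma sigLT_trans {M1 M2 M3 : Finset (I.S × SeatT I)}
    (h12 : SigLT I M1 M2) (h23 : SigLT I M2 M3) : SigLT I M1 M3 := by
  obtain ⟨k, hk1, hkr, heq, hlt⟩ := h12
  obtain ⟨k', hk1', hkr', heq', hlt'⟩ := h23
  rcases lt_trichotomy k k' with h | h | h
  · exact ⟨k, hk1, hkr, fun i h1 h2 => (heq i h1 h2).trans (heq' i h1 (h2.trans h)),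
      by rw [← heq' k hk1 h]; exact hlt⟩
  · subst h
    exact ⟨k, hk1, hkr, fun i h1 h2 => (heq i h1 h2).trans (heq' i h1 h2), hlt.trans hlt'⟩
  · exact ⟨k', hk1', hkr', fun i h1 h2 => (heq i h1 (h2.trans h)).trans (heq' i h1 h2),
      by rw [heq k' hk1' h]; exact hlt'⟩

lemma sigLT_irrefl (M : Finset (I.S × SeatT I)) : ¬ SigLT I M M := by
  rintro ⟨k, _, _, _, hlt⟩
  exact lt_irrefl _ hlt

/-- The finite set of all matchings of size at most `q`. -/
noncomputable def allM : Finset (Finset (I.S × SeatT I)) :=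
  (bigE I).powerset.filter (fun M => IsMatching I M ∧ M.card ≤ I.q)

lemma mem_allM {M : Finset (I.S × SeatT I)} (h1 : IsMatching I M) (h2 : M.card ≤ I.q) :
    M ∈ allM I := by
  simp only [allM, Finset.mem_filter, Finset.mem_powerset]
  exact ⟨matching_subset I h1, h1, h2⟩

lemma empty_mem_allM : ∅ ∈ allM I := by
  refine mem_allM I ⟨?_, ?_, ?_⟩ (by simp) <;> intro e he <;> simp at he

lemma exists_rankMaximal : ∃ M, RankMaximal I M := by
  obtain ⟨M, hM, hmax⟩ := exists_max_rel (SigLT I) (fun _ _ _ => sigLT_trans I)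
    (sigLT_irrefl I) (allM I) ⟨∅, empty_mem_allM I⟩
  simp only [allM, Finset.mem_filter, Finset.mem_powerset] at hM
  exact ⟨M, hM.2.1, hM.2.2, fun M' h1 h2 => hmax M' (mem_allM I h1 h2)⟩

lemma exists_balancedRep : ∃ M, BalancedRep I M := by
  obtain ⟨M0, h0⟩ := exists_rankMaximal I
  have hne : ((allM I).filter (fun M => RankMaximal I M)).Nonempty :=
    ⟨M0, Finset.mem_filter.2 ⟨mem_allM I h0.1 h0.2.1, h0⟩⟩
  obtain ⟨M, hM, hmax⟩ := Finset.exists_max_image _ (fun M => minRatio I M) hne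
  exact ⟨M, (Finset.mem_filter.1 hM).2, fun M' h' =>
    hmax M' (Finset.mem_filter.2 ⟨mem_allM I h'.1 h'.2.1, h'⟩)⟩

lemma exists_extension {M : Finset (I.S × SeatT I)} (hM : IsMatching I M)
    (h1 : M.card < Fintype.card I.S) (h2 : M.card < I.q) :
    ∃ e : I.S × SeatT I, e ∉ M ∧ IsMatching I (insert e M) ∧
      seatRank I e.2 = I.r ∧ e.1 ∉ covered I M := by
  have hcov : (covered I M).card < (Finset.univ : Finset I.S).card := by
    rw [covered_card I hM]; simpa using h1
  have hstu : ∃ s, s ∉ covered I M := by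
    by_contra h
    push_neg at h
    have hsub : (Finset.univ : Finset I.S) ⊆ covered I M := fun s _ => h s
    have := Finset.card_le_card hsub
    omega
  obtain ⟨s, hs⟩ := hstu
  have hGcard : ((Finset.range I.q).image
      (fun i => ((none, I.r, i) : SeatT I))).card = I.q := by
    rw [Finset.card_image_of_injective _ (fun a b hab => by simpa using hab),
      Finset.card_range]
  have hused : (M.image Prod.snd).card ≤ M.card := Finset.card_image_le
  have hseat : ∃ v ∈ (Finset.range I.q).image (fun i => ((none, I.r, i) : SeatT I)),
      v ∉ M.image Prod.snd := by
    by_contra h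
    push_neg at h
    have := Finset.card_le_card h
    omega
  obtain ⟨v, hvG, hv⟩ := hseat
  obtain ⟨i, hi, rfl⟩ := Finset.mem_image.1 hvG
  rw [Finset.mem_range] at hi
  refine ⟨(s, (none, I.r, i)), ?_, ⟨?_, ?_, ?_⟩, rfl, hs⟩
  · intro hmem
    exact hv (Finset.mem_image.2 ⟨_, hmem, rfl⟩)
  · intro e he
    rcases Finset.mem_insert.1 he with rfl | he
    · exact ⟨⟨rfl, hi⟩, trivial⟩
    · exact hM.1 e he
  · intro e he e' he' hfst
    rcases Finset.mem_insert.1 he with rfl | he <;> rcases Finset.mem_insert.1 he' with rfl | he'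
    · rfl
    · exact absurd (Finset.mem_image.2 ⟨e', he', hfst.symm⟩) hs
    · exact absurd (Finset.mem_image.2 ⟨e, he, hfst⟩) hs
    · exact hM.2.1 e he e' he' hfst
  · intro e he e' he' hsnd
    rcases Finset.mem_insert.1 he with rfl | he <;> rcases Finset.mem_insert.1 he' with rfl | he'
    · rfl
    · exact absurd (Finset.mem_image.2 ⟨e', he', hsnd.symm⟩) hv
    · exact absurd (Finset.mem_image.2 ⟨e, he, hsnd⟩) hv
    · exact hM.2.2 e he e' he' hsnd

lemma sig_insert_ne {M : Finset (I.S × SeatT I)} {e : I.S × SeatT I} {i : ℕ}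
    (h : seatRank I e.2 ≠ i) : sig I (insert e M) i = sig I M i := by
  unfold sig
  rw [Finset.filter_insert, if_neg h]

lemma sig_insert_eq {M : Finset (I.S × SeatT I)} {e : I.S × SeatT I} (he : e ∉ M) :
    sig I (insert e M) (seatRank I e.2) = sig I M (seatRank I e.2) + 1 := by
  unfold sig
  rw [Finset.filter_insert, if_pos rfl,
    Finset.card_insert_of_notMem (fun h => he (Finset.mem_filter.1 h).1)]

lemma card_le_S {M : Finset (I.S × SeatT I)} (hM : IsMatching I M) :
    M.card ≤ Fintype.card I.S := by
  rw [← covered_card I hM]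
  exact Finset.card_le_univ _

lemma rankMaximal_card {M : Finset (I.S × SeatT I)} (hr : 1 ≤ I.r)
    (hM : RankMaximal I M) : M.card = min (Fintype.card I.S) I.q := by
  obtain ⟨hm, hq, hmax⟩ := hM
  have hle : M.card ≤ Fintype.card I.S := card_le_S I hm
  by_contra hne
  have h1 : M.card < Fintype.card I.S := by omega
  have h2 : M.card < I.q := by omega
  obtain ⟨e, heM, hins, hrank, _⟩ := exists_extension I hm h1 h2
  apply hmax (insert e M) hins (by rw [Finset.card_insert_of_notMem heM]; omega)
  refine ⟨I.r, hr, le_refl _, ?_, ?_⟩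
  · intro j hj1 hj2
    exact (sig_insert_ne I (by omega : seatRank I e.2 ≠ j)).symm
  · rw [← hrank, sig_insert_eq I heM]
    omega

lemma Mu_mono {M M' : Finset (I.S × SeatT I)} (h : covered I M ⊆ covered I M')
    (u : Finset I.T) : Mu I M u ≤ Mu I M' u :=
  Finset.card_le_card (Finset.filter_subset_filter _ h)

lemma minRatio_mono {M M' : Finset (I.S × SeatT I)} (h : covered I M ⊆ covered I M') :
    minRatio I M ≤ minRatio I M' := by
  unfold minRatio
  apply Finset.le_min
  intro b hb
  obtain ⟨u, hu, rfl⟩ := Finset.mem_image.1 hb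
  refine le_trans (Finset.min_le (Finset.mem_image_of_mem _ hu)) ?_
  rw [WithTop.coe_le_coe]
  by_cases hc : ((Su I u).card : ℚ) = 0
  · simp [hc]
  · have hcpos : (0 : ℚ) < ((Su I u).card : ℚ) :=
      lt_of_le_of_ne (by positivity) (Ne.symm hc)
    exact (div_le_div_iff_of_pos_right hcpos).2 (by exact_mod_cast Mu_mono I h u)

lemma covered_subset_insert (M : Finset (I.S × SeatT I)) (e : I.S × SeatT I) :
    covered I M ⊆ covered I (insert e M) :=
  Finset.image_subset_image (Finset.subset_insert _ _)

lemma exists_balancedRep_full :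
    ∃ M, BalancedRep I M ∧ M.card = min (Fintype.card I.S) I.q := by
  rcases Nat.eq_zero_or_pos I.r with hr | hr
  · obtain ⟨M0, h0⟩ := exists_balancedRep I
    have hne : ((allM I).filter (fun M => BalancedRep I M)).Nonempty :=
      ⟨M0, Finset.mem_filter.2 ⟨mem_allM I h0.1.1 h0.1.2.1, h0⟩⟩
    obtain ⟨M, hM, hmax⟩ := Finset.exists_max_image _ (fun M => M.card) hne
    have hMb : BalancedRep I M := (Finset.mem_filter.1 hM).2
    refine ⟨M, hMb, ?_⟩
    have hm := hMb.1.1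
    have hq := hMb.1.2.1
    have hle : M.card ≤ Fintype.card I.S := card_le_S I hm
    by_contra hne'
    have h1 : M.card < Fintype.card I.S := by omega
    have h2 : M.card < I.q := by omega
    obtain ⟨e, heM, hins, _, _⟩ := exists_extension I hm h1 h2
    have hcard : (insert e M).card = M.card + 1 := Finset.card_insert_of_notMem heM
    have hRM : RankMaximal I (insert e M) := by
      refine ⟨hins, by omega, ?_⟩
      rintro M' _ _ ⟨k, hk1, hkr, _, _⟩
      omega
    have hBR : BalancedRep I (insert e M) :=
      ⟨hRM, fun M' h' => le_trans (hMb.2 M' h')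
        (minRatio_mono I (covered_subset_insert I M e))⟩
    have := hmax (insert e M)
      (Finset.mem_filter.2 ⟨mem_allM I hins (by omega), hBR⟩)
    omega
  · obtain ⟨M, hM⟩ := exists_balancedRep I
    exact ⟨M, hM, rankMaximal_card I hr hM.1⟩

end AuxProof

/-- for every instance there exists a subset `S* ⊆ S` with
`|S*| ≤ q` satisfying non-wastefulness, maximal diversity, balanced
representation and justified envy-freeness. -/
theorem exists_good_set (I : Inst) :
    ∃ A : Finset I.S, A.card ≤ I.q ∧ NonWasteful I A ∧ MaxDiversity I A ∧
      BalancedRepSet I A ∧ JEF I A := by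
  classical
  set rk : I.S → ℕ := fun s => (Finset.univ.filter (fun x => x ≤ s)).card with hrk
  have hrkmono : ∀ {a b : I.S}, a < b → rk a < rk b := by
    intro a b hab
    apply Finset.card_lt_card
    constructor
    · intro x hx
      simp only [Finset.mem_filter, Finset.mem_univ, true_and] at hx ⊢
      exact hx.trans hab.le
    · intro hsub
      have hb : b ∈ Finset.univ.filter (fun x => x ≤ b) := by simp
      have := hsub hb
      simp only [Finset.mem_filter, Finset.mem_univ, true_and] at this
      exact absurd this (not_le.2 hab)
  obtain ⟨M0, hM0, hM0c⟩ := exists_balancedRep_full I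
  have hne : ((allM I).filter
      (fun M => BalancedRep I M ∧ M.card = min (Fintype.card I.S) I.q)).Nonempty :=
    ⟨M0, Finset.mem_filter.2 ⟨mem_allM I hM0.1.1 hM0.1.2.1, hM0, hM0c⟩⟩
  obtain ⟨M, hM, hmax⟩ := Finset.exists_max_image _
    (fun M => ∑ x ∈ covered I M, rk x) hne
  obtain ⟨hMmem, hMb, hMc⟩ := Finset.mem_filter.1 hM
  have hMcov : (covered I M).card = min (Fintype.card I.S) I.q := by
    rw [covered_card I hMb.1.1, hMc]
  refine ⟨covered I M, ?_, ?_, ⟨M, hMb.1, Finset.Subset.refl _⟩,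
    ⟨M, hMb, Finset.Subset.refl _⟩, ?_⟩
  · rw [hMcov]; omega
  · exact hMcov
  · intro h
    obtain ⟨s, s', hs, hs', hprio, _, M2, hM2b, hM2cov⟩ := h
    have hss' : s' ≠ s := ne_of_lt hprio
    have hBeq : insert s (covered I M) \ {s'} = insert s ((covered I M).erase s') := by
      rw [Finset.sdiff_singleton_eq_erase, Finset.erase_insert_of_ne (Ne.symm hss')]
    have hsE : s ∉ (covered I M).erase s' := fun h => hs (Finset.mem_of_mem_erase h)
    have hcovpos : 1 ≤ (covered I M).card := Finset.card_pos.2 ⟨s', hs'⟩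
    have hBcard : (insert s (covered I M) \ {s'}).card = (covered I M).card := by
      rw [hBeq, Finset.card_insert_of_notMem hsE, Finset.card_erase_of_mem hs']
      omega
    have hM2le : (covered I M2).card ≤ min (Fintype.card I.S) I.q := by
      rw [covered_card I hM2b.1.1]
      exact le_min (card_le_S I hM2b.1.1) hM2b.1.2.1
    have hBeq2 : insert s (covered I M) \ {s'} = covered I M2 := by
      apply Finset.eq_of_subset_of_card_le hM2cov
      rw [hBcard, hMcov]
      exact hM2le
    have hM2card : M2.card = min (Fintype.card I.S) I.q := by
      rw [← covered_card I hM2b.1.1, ← hBeq2, hBcard, hMcov]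
    have hM2mem : M2 ∈ (allM I).filter
        (fun M => BalancedRep I M ∧ M.card = min (Fintype.card I.S) I.q) :=
      Finset.mem_filter.2 ⟨mem_allM I hM2b.1.1 hM2b.1.2.1, ⟨hM2b, hM2card⟩⟩
    have hle := hmax M2 hM2mem
    rw [← hBeq2, hBeq, Finset.sum_insert hsE] at hle
    have hsum : rk s' + ∑ x ∈ (covered I M).erase s', rk x = ∑ x ∈ covered I M, rk x :=
      Finset.add_sum_erase _ _ hs'
    have hlt : rk s' < rk s := hrkmono hprio
    omega
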